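/- Let (C, ≤) be a finite partially ordered set with a least element r such that for every x ∈ C the set {y ∈ C : y ≤ x} is a chain (a tree order), and let H be the comparability graph of (C, ≤): the simple graph on vertex set C in which two distinct vertices are adjacent if and only if they are comparable in ≤. Let Z ⊆ C and let F be the set of maximal elements of Z (the x ∈ Z for which no y ∈ Z satisfies x < y). Then for every D ⊆ C: D dominates Z in H if and only if D dominates F in H. -/

import Mathlib

variable {V : Type*}

/-- The closed neighborhood `N[x]` of a vertex. -/
def cnbr (G : SimpleGraph V) (x : V) : Set V := insert x (G.neighborSet x)

/-- `N[X] = ⋃ x ∈ X, N[x]`. -/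
def cnbrSet (G : SimpleGraph V) (X : Set V) : Set V := ⋃ x ∈ X, cnbr G x

/-- `N(X) = N[X] \ X`. -/
def onbrSet (G : SimpleGraph V) (X : Set V) : Set V := cnbrSet G X \ X

/-- `D` dominates `X` if `X ⊆ N[D]`. -/
def Dominates (G : SimpleGraph V) (D X : Set V) : Prop := X ⊆ cnbrSet G D

/-- `D` is a minimal dominating set of `G`. -/
def IsMinDomSet (G : SimpleGraph V) (D : Set V) : Prop :=
  Dominates G D Set.univ ∧ ∀ D' : Set V, D' ⊂ D → ¬ Dominates G D' Set.univ

/-- `Priv(D, x)`: private neighbors of `x` w.r.t. `D`. -/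
def priv (G : SimpleGraph V) (D : Set V) (x : V) : Set V := {u | cnbr G u ∩ D = {x}}

/-- `IR` is an irredundant set of `G`. -/
def IsIrredundantSet (G : SimpleGraph V) (IR : Set V) : Prop :=
  (∀ v : V, ∃ x ∈ IR, cnbr G x ⊆ cnbr G v) ∧
  (∀ x ∈ IR, ∀ v : V, ¬ cnbr G v ⊂ cnbr G x) ∧
  (∀ x ∈ IR, ∀ y ∈ IR, x ≠ y → cnbr G x ≠ cnbr G y)

/-- `Priv_IR(D, x) = Priv(D, x) ∩ IR`. -/
def privIR (G : SimpleGraph V) (IR D : Set V) (x : V) : Set V := priv G D x ∩ IR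

/-- `A ∈ D_RN(G)`: `A` is the intersection of a minimal dominating set with `RN = V \ IR`. -/
def memDRN (G : SimpleGraph V) (IR A : Set V) : Prop :=
  ∃ D : Set V, IsMinDomSet G D ∧ A = D ∩ IRᶜ

/-- `G` is `P_k`-free: it has no induced path on `k` vertices. -/
def PkFree (G : SimpleGraph V) (k : ℕ) : Prop :=
  ¬ ∃ f : Fin k → V, Function.Injective f ∧
      ∀ i j : Fin k, G.Adj (f i) (f j) ↔ (i.val + 1 = j.val ∨ j.val + 1 = i.val)

/-- `G` is chordal: no induced cycle on `n ≥ 4` vertices. -/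
def Chordal (G : SimpleGraph V) : Prop :=
  ∀ n : ℕ, 4 ≤ n → ¬ ∃ f : ZMod n → V, Function.Injective f ∧
      ∀ i j : ZMod n, G.Adj (f i) (f j) ↔ (i = j + 1 ∨ j = i + 1)

/-- `C` is a connected component of the subgraph of `G` induced by `S`. -/
def IsCompOf (G : SimpleGraph V) (S C : Set V) : Prop :=
  C ⊆ S ∧ C.Nonempty ∧ (G.induce C).Connected ∧
    ∀ x ∈ C, ∀ y ∈ S, G.Adj x y → y ∈ C

/-- `B(A)`: the elements of `A` having an irredundant private neighbor in some irredundant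
component entirely contained in `N(A)`. -/
def Bset (G : SimpleGraph V) (IR A : Set V) : Set V :=
  {a ∈ A | ∃ C : Set V, IsCompOf G IR C ∧ C ⊆ onbrSet G A ∧ (privIR G IR A a ∩ C).Nonempty}

/-- Domination inside the subgraph induced by `C`: every `u ∈ X` equals, or is adjacent
(within `C`) to, some `d ∈ D`.  For `D, X ⊆ C` this is domination in `G[C]`. -/
def domIn (G : SimpleGraph V) (C D X : Set V) : Prop :=
  ∀ u ∈ X, ∃ d ∈ D, u = d ∨ (G.Adj d u ∧ d ∈ C ∧ u ∈ C)


/-- Let `(C, ≤)` be a finite tree order (least element, down-sets are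
chains), `H` its comparability graph, `Z ⊆ C` and `F` the maximal elements of `Z`. Then a
set `D` dominates `Z` in `H` iff it dominates `F` in `H`. -/
theorem stmt_13 {C : Type*} [Fintype C] [PartialOrder C] [OrderBot C]
    (hchain : ∀ x : C, IsChain (· ≤ ·) {y | y ≤ x})
    (H : SimpleGraph C)
    (hH : ∀ x y : C, H.Adj x y ↔ x ≠ y ∧ (x ≤ y ∨ y ≤ x))
    (Z F : Set C)
    (hF : F = {x ∈ Z | ∀ y ∈ Z, ¬ x < y})
    (D : Set C) :
    Dominates H D Z ↔ Dominates H D F := by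
  constructor
  · intro h x hx
    apply h
    rw [hF] at hx; exact hx.1
  · intro h z hz
    have hS : ({y ∈ Z | z ≤ y} : Set C).Finite := Set.toFinite _
    obtain ⟨f, hfS, hfmax⟩ := hS.exists_maximalFor id _ ⟨z, hz, le_refl z⟩
    obtain ⟨hfZ, hzf⟩ := hfS
    have hfF : f ∈ F := by
      rw [hF]
      refine ⟨hfZ, fun y hy hlt => ?_⟩
      exact hlt.ne (le_antisymm hlt.le (hfmax (j := y) ⟨hy, hzf.trans hlt.le⟩ hlt.le))
    obtain ⟨d, hdD, hzd⟩ := Set.mem_iUnion₂.mp (h hfF)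
    apply Set.mem_iUnion₂.mpr
    refine ⟨d, hdD, ?_⟩
    have hdf : d ≤ f ∨ f ≤ d := by
      rcases hzd with h1 | h1
      · exact Or.inl (h1 ▸ le_refl f)
      · exact ((hH d f).mp h1).2
    by_cases hdz : d = z
    · exact Or.inl hdz.symm
    · refine Or.inr ((hH d z).mpr ⟨hdz, ?_⟩)
      rcases hdf with h1 | h1
      · rcases hchain f h1 hzf hdz with h2 | h2
        · exact Or.inl h2
        · exact Or.inr h2
      · exact Or.inr (hzf.trans h1)
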